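/- For every L ⊆ ℝ, the prime closure of L equals the set of suprema ⊔C of coherent subsets C of 𝒫(L), where 𝒫(L) is the set of prime prefixes of elements of L. Moreover, for L, K ⊆ ℝ, the prime closures of L and K coincide if and only if 𝒫(L) = 𝒫(K). -/
import Mathlib


/-!
Abstract setting for real Mazurkiewicz traces: `T` is the set ℝ of real
traces with the prefix partial order, `P : Set T` is the set 𝒫 of prime
traces, `cone p` is `pℝ = {t : p ≤ t}`.
-/

namespace MzTrace

variable {T : Type} [PartialOrder T]

/-- `cone p` models `pℝ`, the set of traces having `p` as a prefix. -/
def cone (p : T) : Set T := Set.Ici p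

/-- A set of traces is prime-open (w.r.t. the set `P` of prime traces)
if it is a union `⋃ {pℝ : p ∈ U}` for some `U ⊆ P`. -/
def PrimeOpen (P : Set T) (L : Set T) : Prop := ∃ U ⊆ P, L = ⋃ p ∈ U, cone p

/-- A set is prime-closed if its complement is prime-open. -/
def PrimeClosed (P : Set T) (L : Set T) : Prop := PrimeOpen P Lᶜ

/-- The prime closure of `L`: the intersection of all prime-closed supersets. -/
def primeClosure (P : Set T) (L : Set T) : Set T := ⋂₀ {K | PrimeClosed P K ∧ L ⊆ K}

/-- A set `C` of traces is coherent if it has a common upper bound (a trace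
`t` with `C ⊆ pref(t)`). -/
def Coherent (C : Set T) : Prop := BddAbove C

/-- `primePref P L` is `𝒫(L)`, the set of prime prefixes of elements of `L`. -/
def primePref (P : Set T) (L : Set T) : Set T := {p ∈ P | ∃ t ∈ L, p ≤ t}

/-- `L` is locally monitorable: for every prime `s` there is a prime `t`
with `{s,t}` coherent (i.e. `s ≤ tℝ`) and `tℝ ⊆ L` or `tℝ ⊆ Lᶜ`. -/
def LocallyMonitorable (P : Set T) (L : Set T) : Prop :=
  ∀ s ∈ P, ∃ t ∈ P, Coherent {s, t} ∧ (cone t ⊆ L ∨ cone t ⊆ Lᶜ)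

end MzTrace

namespace MzTrace

variable {T : Type} [PartialOrder T]

/-- Lemma lem:a: under the basic domain properties of real
traces (coherent sets of primes have suprema, every prime below a supremum is
below some member, and every trace is the supremum of its prime prefixes),
the prime closure of `L` is the set of suprema `⊔C` of coherent subsets
`C ⊆ 𝒫(L)`; moreover `L̄ = K̄` iff `𝒫(L) = 𝒫(K)`. -/
theorem primeClosure_eq_sups_of_coherent (P : Set T)
    (hsup : ∀ C ⊆ P, Coherent C → ∃ x, IsLUB C x)
    (hprime : ∀ p ∈ P, ∀ C : Set T, ∀ x : T, C ⊆ P → IsLUB C x → p ≤ x → ∃ c ∈ C, p ≤ c)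
    (hlub : ∀ x : T, IsLUB (primePref P {x}) x) :
    (∀ L : Set T, primeClosure P L = {x | ∃ C ⊆ primePref P L, IsLUB C x}) ∧
    (∀ L K : Set T, primeClosure P L = primeClosure P K ↔ primePref P L = primePref P K) := by
  have hPP : ∀ L : Set T, primePref P L ⊆ P := fun L p hp => hp.1
  have main : ∀ L : Set T, primeClosure P L = {x | ∃ C ⊆ primePref P L, IsLUB C x} := by
    intro L
    set S : Set T := {x | ∃ C ⊆ primePref P L, IsLUB C x} with hS
    have hLS : L ⊆ S := by
      intro t ht
      refine ⟨primePref P {t}, ?_, hlub t⟩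
      rintro p ⟨hp, u, hu, hle⟩
      exact ⟨hp, t, ht, by simpa [Set.mem_singleton_iff.mp hu] using hle⟩
    have hclosed : PrimeClosed P S := by
      refine ⟨P \ primePref P L, Set.diff_subset, ?_⟩
      ext x
      simp only [Set.mem_compl_iff, Set.mem_iUnion, cone, Set.mem_Ici]
      constructor
      · intro hx
        by_contra hc
        push_neg at hc
        refine hx ⟨primePref P {x}, ?_, hlub x⟩
        rintro p ⟨hp, u, hu, hle⟩
        have hle' : p ≤ x := by simpa [Set.mem_singleton_iff.mp hu] using hle
        by_contra hnp
        exact (hc p ⟨hp, hnp⟩) hle'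
      · rintro ⟨p, ⟨hpP, hpL⟩, hpx⟩ ⟨C, hCL, hC⟩
        obtain ⟨c, hcC, hpc⟩ := hprime p hpP C x (hCL.trans (hPP L)) hC hpx
        obtain ⟨hcP, t, htL, hct⟩ := hCL hcC
        exact hpL ⟨hpP, t, htL, hpc.trans hct⟩
    have hmin : ∀ K, PrimeClosed P K → L ⊆ K → S ⊆ K := by
      rintro K ⟨U, hUP, hU⟩ hLK x ⟨C, hCL, hC⟩
      by_contra hxK
      have hx' : x ∈ Kᶜ := hxK
      rw [hU] at hx'
      simp only [Set.mem_iUnion, cone, Set.mem_Ici] at hx'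
      obtain ⟨p, hpU, hpx⟩ := hx'
      obtain ⟨c, hcC, hpc⟩ := hprime p (hUP hpU) C x (hCL.trans (hPP L)) hC hpx
      obtain ⟨hcP, t, htL, hct⟩ := hCL hcC
      have ht' : t ∈ Kᶜ := by
        rw [hU]
        simp only [Set.mem_iUnion, cone, Set.mem_Ici]
        exact ⟨p, hpU, hpc.trans hct⟩
      exact ht' (hLK htL)
    apply Set.Subset.antisymm
    · exact fun x hx => Set.sInter_subset_of_mem (Set.mem_setOf.mpr ⟨hclosed, hLS⟩) hx
    · intro x hx K hK
      exact hmin K hK.1 hK.2 hx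
  refine ⟨main, fun L K => ?_⟩
  constructor
  · intro h
    have key : ∀ A B : Set T, primeClosure P A = primeClosure P B →
        primePref P A ⊆ primePref P B := by
      rintro A B hAB p ⟨hpP, t, htA, hpt⟩
      have htc : t ∈ primeClosure P A := fun K hK => hK.2 htA
      rw [hAB, main B] at htc
      obtain ⟨C, hCB, hC⟩ := htc
      obtain ⟨c, hcC, hpc⟩ := hprime p hpP C t (hCB.trans (hPP B)) hC hpt
      obtain ⟨hcP, u, huB, hcu⟩ := hCB hcC
      exact ⟨hpP, u, huB, hpc.trans hcu⟩
    exact Set.Subset.antisymm (key L K h) (key K L h.symm)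
  · intro h
    rw [main L, main K, h]

end MzTrace
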